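/- Let A = ⊕_{λ∈Γ} A^λ be a Γ-graded associative commutative unital ℂ-algebra (so A^λ·A^χ ⊆ A^{λ+χ} and 1 ∈ A^0). Define a new product on A by setting a * b = (−1)^{r(λ,χ)} a·b for homogeneous a ∈ A^λ, b ∈ A^χ (the sign given by any integer lift of r(λ,χ) ∈ ℤ/2ℤ), extended bilinearly. Then (A, *) is an associative unital Γ-graded ℂ-algebra with the same unit, and for all homogeneous a ∈ A^λ, b ∈ A^χ one has a * b = (−1)^{p(λ)p(χ)+B(λ,χ)} b * a; that is, (A, *) is a B-twisted commutative algebra. -/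

import Mathlib

namespace S6

/-- The `i`-th standard basis vector of `Γ = ℤⁿ`. -/
def e (n : ℕ) (i : Fin n) : Fin n → ℤ := Pi.single i 1

/-- The sign `(−1)^t` attached to an element `t ∈ ℤ/2ℤ`. -/
def sgn (t : ZMod 2) : ℂ := (-1 : ℂ) ^ t.val

/-- **The sign-twist of a graded commutative algebra is twisted commutative**
(Statement 6).  Let `Γ = ℤⁿ`, `B` a symmetric biadditive form on `Γ`,
`p(λ) = B(λ,λ) mod 2`, and `r` the biadditive map with `r(eᵢ,eⱼ) = p(eᵢ)p(eⱼ) + B(eᵢ,eⱼ)`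
for `i > j` and `0` for `i ≤ j`.  Let `A = ⊕_{λ∈Γ} A^λ` be a `Γ`-graded associative
commutative unital `ℂ`-algebra and let `*` be the bilinear product with
`a * b = (−1)^{r(λ,χ)} a·b` for homogeneous `a ∈ A^λ`, `b ∈ A^χ`.  Then `(A, *)` is an
associative unital `Γ`-graded `ℂ`-algebra with the same unit, and
`a * b = (−1)^{p(λ)p(χ)+B(λ,χ)} b * a` for homogeneous `a, b`. -/
theorem twisted_commutative_of_sign_modified_product (n : ℕ)
    (B : (Fin n → ℤ) → (Fin n → ℤ) → ℤ)
    (hB_add_left : ∀ x y z, B (x + y) z = B x z + B y z)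
    (hB_add_right : ∀ x y z, B x (y + z) = B x y + B x z)
    (hB_symm : ∀ x y, B x y = B y x)
    (r : (Fin n → ℤ) → (Fin n → ℤ) → ZMod 2)
    (hr_add_left : ∀ x y z, r (x + y) z = r x z + r y z)
    (hr_add_right : ∀ x y z, r x (y + z) = r x y + r x z)
    (hr_basis_gt : ∀ i j : Fin n, j < i →
      r (e n i) (e n j) =
        (B (e n i) (e n i) : ZMod 2) * (B (e n j) (e n j) : ZMod 2) +
          (B (e n i) (e n j) : ZMod 2))
    (hr_basis_le : ∀ i j : Fin n, i ≤ j → r (e n i) (e n j) = 0)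
    (A : Type) [CommRing A] [Algebra ℂ A]
    (𝒜 : (Fin n → ℤ) → Submodule ℂ A) [GradedAlgebra 𝒜]
    (star : A →ₗ[ℂ] A →ₗ[ℂ] A)
    (hstar : ∀ (lam chi : Fin n → ℤ) (a b : A), a ∈ 𝒜 lam → b ∈ 𝒜 chi →
      star a b = sgn (r lam chi) • (a * b)) :
    (∀ x y z : A, star (star x y) z = star x (star y z)) ∧
    (∀ x : A, star 1 x = x ∧ star x 1 = x) ∧
    (∀ (lam chi : Fin n → ℤ) (a b : A), a ∈ 𝒜 lam → b ∈ 𝒜 chi →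
      star a b ∈ 𝒜 (lam + chi)) ∧
    (∀ (lam chi : Fin n → ℤ) (a b : A), a ∈ 𝒜 lam → b ∈ 𝒜 chi →
      star a b =
        sgn ((B lam lam : ZMod 2) * (B chi chi : ZMod 2) + (B lam chi : ZMod 2)) •
          (star b a)) := by
  classical
  have hsgn_mul : ∀ s t : ZMod 2, sgn s * sgn t = sgn (s + t) := by
    intro s t
    have h2 : ZMod.val (2 : ZMod 2) = 0 := rfl
    have h1 : ZMod.val (1 : ZMod 2) = 1 := rfl
    have h0 : ZMod.val (0 : ZMod 2) = 0 := rfl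
    simp only [sgn]
    rw [← pow_add]
    rcases (by decide : ∀ s t : ZMod 2, (s + t).val = s.val + t.val ∨
        (s + t).val + 2 = s.val + t.val) s t with h | h
    · rw [h]
    · rw [← h, pow_add]; norm_num
  have hsgn_zero : sgn 0 = 1 := by simp [sgn, ZMod.val_zero]
  have hr0l : ∀ x, r 0 x = 0 := by
    intro x
    have h := hr_add_left 0 0 x
    rw [add_zero] at h
    exact (left_eq_add.mp h)
  have hr0r : ∀ x, r x 0 = 0 := by
    intro x
    have h := hr_add_right x 0 0
    rw [add_zero] at h
    exact (left_eq_add.mp h)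
  have hp_add : ∀ x y : Fin n → ℤ,
      ((B (x + y) (x + y) : ℤ) : ZMod 2) = ((B x x : ℤ) : ZMod 2) + ((B y y : ℤ) : ZMod 2) := by
    intro x y
    have h : B (x + y) (x + y) = B x x + B y y + 2 * B x y := by
      rw [hB_add_left, hB_add_right, hB_add_right, hB_symm y x]; ring
    rw [h]
    push_cast
    rw [show (2 : ZMod 2) = 0 from rfl]
    ring
  have hchar : ∀ t : ZMod 2, t + t = 0 := by decide
  have hsq : ∀ t : ZMod 2, t * t = t := by decide
  let F1 : (Fin n → ℤ) →+ (Fin n → ℤ) →+ ZMod 2 :=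
    AddMonoidHom.mk' (fun x => AddMonoidHom.mk' (fun y => r x y + r y x)
      (fun y z => by show r x (y + z) + r (y + z) x = (r x y + r y x) + (r x z + r z x)
                     rw [hr_add_right, hr_add_left]; ring))
      (fun x y => by
        apply AddMonoidHom.ext
        intro z
        show r (x + y) z + r z (x + y) = (r x z + r z x) + (r y z + r z y)
        rw [hr_add_left, hr_add_right]; ring)
  let F2 : (Fin n → ℤ) →+ (Fin n → ℤ) →+ ZMod 2 :=
    AddMonoidHom.mk' (fun x => AddMonoidHom.mk'
      (fun y => ((B x x : ℤ) : ZMod 2) * ((B y y : ℤ) : ZMod 2) + ((B x y : ℤ) : ZMod 2))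
      (fun y z => by
        show ((B x x : ℤ) : ZMod 2) * ((B (y + z) (y + z) : ℤ) : ZMod 2)
            + ((B x (y + z) : ℤ) : ZMod 2) =
          (((B x x : ℤ) : ZMod 2) * ((B y y : ℤ) : ZMod 2) + ((B x y : ℤ) : ZMod 2)) +
          (((B x x : ℤ) : ZMod 2) * ((B z z : ℤ) : ZMod 2) + ((B x z : ℤ) : ZMod 2))
        rw [hp_add, hB_add_right]; push_cast; ring))
      (fun x y => by
        apply AddMonoidHom.ext
        intro z
        show ((B (x + y) (x + y) : ℤ) : ZMod 2) * ((B z z : ℤ) : ZMod 2)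
            + ((B (x + y) z : ℤ) : ZMod 2) =
          (((B x x : ℤ) : ZMod 2) * ((B z z : ℤ) : ZMod 2) + ((B x z : ℤ) : ZMod 2)) +
          (((B y y : ℤ) : ZMod 2) * ((B z z : ℤ) : ZMod 2) + ((B y z : ℤ) : ZMod 2))
        rw [hp_add, hB_add_left]; push_cast; ring)
  have hsingle : ∀ (i : Fin n) (x : ℤ), Pi.single i x = x • e n i := by
    intro i x
    rw [e, ← Pi.single_smul, smul_eq_mul, mul_one]
  have hF12 : ∀ i j : Fin n, F1 (e n i) (e n j) = F2 (e n i) (e n j) := by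
    intro i j
    show r (e n i) (e n j) + r (e n j) (e n i) =
      ((B (e n i) (e n i) : ℤ) : ZMod 2) * ((B (e n j) (e n j) : ℤ) : ZMod 2) +
        ((B (e n i) (e n j) : ℤ) : ZMod 2)
    rcases lt_trichotomy i j with h | h | h
    · rw [hr_basis_le i j h.le, hr_basis_gt j i h, zero_add, hB_symm (e n j) (e n i),
        mul_comm]
    · subst h
      rw [hr_basis_le i i le_rfl, zero_add, hsq]
      exact (hchar _).symm
    · rw [hr_basis_gt i j h, hr_basis_le j i h.le, add_zero]
  have hF : F1 = F2 := by
    apply AddMonoidHom.functions_ext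
    intro i x
    apply AddMonoidHom.functions_ext
    intro j y
    rw [hsingle i x, hsingle j y, map_zsmul F1, map_zsmul F2,
      AddMonoidHom.smul_apply, AddMonoidHom.smul_apply, map_zsmul, map_zsmul, hF12]
  have key : ∀ lam chi : Fin n → ℤ, r lam chi + r chi lam =
      ((B lam lam : ℤ) : ZMod 2) * ((B chi chi : ℤ) : ZMod 2) + ((B lam chi : ℤ) : ZMod 2) := by
    intro lam chi
    exact DFunLike.congr_fun (DFunLike.congr_fun hF lam) chi
  refine ⟨?_, ?_, ?_, ?_⟩
  · -- associativity
    intro x y z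
    induction x using DirectSum.Decomposition.inductionOn 𝒜 with
    | zero => simp
    | add a b ha hb => simp [map_add, ha, hb]
    | homogeneous ma =>
      rename_i la
      obtain ⟨a, haA⟩ := ma
      induction y using DirectSum.Decomposition.inductionOn 𝒜 with
      | zero => simp
      | add c d hc hd => simp [map_add, hc, hd]
      | homogeneous mb =>
        rename_i lb
        obtain ⟨b, hbA⟩ := mb
        induction z using DirectSum.Decomposition.inductionOn 𝒜 with
        | zero => simp
        | add c d hc hd => simp [map_add, hc, hd]
        | homogeneous mc =>
          rename_i lc
          obtain ⟨c, hcA⟩ := mc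
          rw [hstar la lb a b haA hbA, map_smul, LinearMap.smul_apply,
            hstar (la + lb) lc _ c (SetLike.mul_mem_graded haA hbA) hcA,
            hstar lb lc b c hbA hcA, map_smul,
            hstar la (lb + lc) a _ haA (SetLike.mul_mem_graded hbA hcA),
            smul_smul, smul_smul, hsgn_mul, hsgn_mul, hr_add_left, hr_add_right,
            mul_assoc]
          congr 1
          congr 1
          ring
  · -- unit
    intro x
    constructor
    · induction x using DirectSum.Decomposition.inductionOn 𝒜 with
      | zero => simp
      | add a b ha hb => simp [map_add, ha, hb]
      | homogeneous m =>
        rename_i i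
        obtain ⟨a, haA⟩ := m
        rw [hstar 0 i 1 a (SetLike.one_mem_graded 𝒜) haA, hr0l, hsgn_zero, one_smul,
          one_mul]
    · induction x using DirectSum.Decomposition.inductionOn 𝒜 with
      | zero => simp
      | add a b ha hb => simp [map_add, ha, hb]
      | homogeneous m =>
        rename_i i
        obtain ⟨a, haA⟩ := m
        rw [hstar i 0 a 1 haA (SetLike.one_mem_graded 𝒜), hr0r, hsgn_zero, one_smul,
          mul_one]
  · -- grading
    intro lam chi a b ha hb
    rw [hstar lam chi a b ha hb]
    exact Submodule.smul_mem _ _ (SetLike.mul_mem_graded ha hb)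
  · -- twisted commutativity
    intro lam chi a b ha hb
    rw [hstar lam chi a b ha hb, hstar chi lam b a hb ha, smul_smul, hsgn_mul,
      mul_comm b a]
    congr 1
    congr 1
    have h := key lam chi
    rw [← h, add_assoc, hchar, add_zero]

end S6
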